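/- Let K ∈ L¹(ℝ) be even, positive, and strictly decreasing on (0,∞) (bell-shaped), and let f ∈ L^p(ℝ), 1 ≤ p ≤ ∞, be bell-shaped (even, nonnegative, nonincreasing on [0,∞)). Then the convolution K * f is even, nonnegative, and nonincreasing on [0,∞); moreover if f is not a.e. constant, then K*f attains its maximum only at the origin. -/

import Mathlib

open MeasureTheory ENNReal

theorem stmt9 (p : ℝ≥0∞) (hp : 1 ≤ p) (K f : ℝ → ℝ)
    (hKint : Integrable K) (hKeven : ∀ x, K (-x) = K x) (hKpos : ∀ x, 0 < K x)
    (hKdec : StrictAntiOn K (Set.Ioi 0))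
    (hf : MemLp f p) (hfeven : ∀ x, f (-x) = f x) (hfnn : ∀ x, 0 ≤ f x)
    (hfdec : AntitoneOn f (Set.Ici 0)) :
    (∀ x : ℝ, (∫ y, K (-x - y) * f y) = ∫ y, K (x - y) * f y) ∧
    (∀ x : ℝ, 0 ≤ ∫ y, K (x - y) * f y) ∧
    AntitoneOn (fun x => ∫ y, K (x - y) * f y) (Set.Ici 0) ∧
    ((¬ ∃ c : ℝ, f =ᵐ[volume] fun _ => c) →
      ∀ x : ℝ, x ≠ 0 → (∫ y, K (x - y) * f y) < ∫ y, K (0 - y) * f y) := by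
  classical
  have hKabs : ∀ x : ℝ, K x = K |x| := by
    intro x
    rcases abs_cases x with ⟨h, _⟩ | ⟨h, _⟩
    · rw [h]
    · rw [h, hKeven]
  have hfabs : ∀ x : ℝ, f x = f |x| := by
    intro x
    rcases abs_cases x with ⟨h, _⟩ | ⟨h, _⟩
    · rw [h]
    · rw [h, hfeven]
  have hKle : ∀ a b : ℝ, a ≠ 0 → b ≠ 0 → |a| ≤ |b| → K b ≤ K a := by
    intro a b ha hb hab
    rw [hKabs a, hKabs b]
    rcases eq_or_lt_of_le hab with h | h
    · rw [h]
    · exact (hKdec (Set.mem_Ioi.2 (abs_pos.2 ha)) (Set.mem_Ioi.2 (abs_pos.2 hb)) h).le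
  have hKlt : ∀ a b : ℝ, a ≠ 0 → b ≠ 0 → |a| < |b| → K b < K a := by
    intro a b ha hb hab
    rw [hKabs a, hKabs b]
    exact hKdec (Set.mem_Ioi.2 (abs_pos.2 ha)) (Set.mem_Ioi.2 (abs_pos.2 hb)) hab
  have hfle : ∀ a b : ℝ, |a| ≤ |b| → f b ≤ f a := by
    intro a b hab
    rw [hfabs a, hfabs b]
    exact hfdec (Set.mem_Ici.2 (abs_nonneg a)) (Set.mem_Ici.2 (abs_nonneg b)) hab
  have hfbd : ∀ y : ℝ, ‖f y‖ ≤ f 0 := by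
    intro y
    rw [Real.norm_eq_abs, abs_of_nonneg (hfnn y)]
    exact hfle 0 y (by simp)
  have hfm : AEStronglyMeasurable f volume := hf.1
  have D : ∀ x : ℝ, Integrable (fun y => K (x - y) * f y) := by
    intro x
    have h1 : Integrable (fun y => K (x - y)) := hKint.comp_sub_left x
    have h2 := h1.bdd_mul hfm (ae_of_all _ hfbd)
    exact h2.congr (ae_of_all _ fun y => mul_comm _ _)
  -- Part 1
  have part1 : ∀ x : ℝ, (∫ y, K (-x - y) * f y) = ∫ y, K (x - y) * f y := by
    intro x
    have h := integral_neg_eq_self (fun y => K (-x - y) * f y) volume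
    refine h.symm.trans ?_
    refine integral_congr_ae (ae_of_all _ fun y => ?_)
    show K (-x - -y) * f (-y) = K (x - y) * f y
    rw [show -x - -y = -(x - y) by ring, hKeven, hfeven]
  -- Part 2
  have part2 : ∀ x : ℝ, 0 ≤ ∫ y, K (x - y) * f y :=
    fun x => integral_nonneg fun y => mul_nonneg (hKpos _).le (hfnn _)
  -- pointwise nonnegativity of the symmetrized integrand
  have Gnn : ∀ c d : ℝ, 0 ≤ c → 0 ≤ d → ∀ u : ℝ, u ≠ d → u ≠ -d →
      0 ≤ (K (d + u) - K (d - u)) * (f (c + u) - f (c - u)) := by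
    intro c d hc hd u hu1 hu2
    have hdu1 : d + u ≠ 0 := fun h => hu2 (by linarith)
    have hdu2 : d - u ≠ 0 := fun h => hu1 (by linarith)
    rcases le_or_gt 0 u with hu | hu
    · have h1 : K (d + u) ≤ K (d - u) :=
        hKle (d - u) (d + u) hdu2 hdu1
          (by rw [abs_of_nonneg (show (0:ℝ) ≤ d + u by linarith)]
              exact abs_le.2 ⟨by linarith, by linarith⟩)
      have h2 : f (c + u) ≤ f (c - u) :=
        hfle (c - u) (c + u)
          (by rw [abs_of_nonneg (show (0:ℝ) ≤ c + u by linarith)]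
              exact abs_le.2 ⟨by linarith, by linarith⟩)
      have e : (K (d + u) - K (d - u)) * (f (c + u) - f (c - u))
          = (K (d - u) - K (d + u)) * (f (c - u) - f (c + u)) := by ring
      rw [e]
      exact mul_nonneg (by linarith) (by linarith)
    · have h1 : K (d - u) ≤ K (d + u) :=
        hKle (d + u) (d - u) hdu1 hdu2
          (by rw [abs_of_nonneg (show (0:ℝ) ≤ d - u by linarith)]
              exact abs_le.2 ⟨by linarith, by linarith⟩)
      have h2 : f (c - u) ≤ f (c + u) :=
        hfle (c + u) (c - u)
          (by rw [abs_of_nonneg (show (0:ℝ) ≤ c - u by linarith)]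
              exact abs_le.2 ⟨by linarith, by linarith⟩)
      exact mul_nonneg (by linarith) (by linarith)
  have aene : ∀ d : ℝ, ∀ᵐ u : ℝ, u ≠ d := by
    intro d
    rw [ae_iff]
    simp only [not_not, Set.setOf_eq_eq_singleton]
    exact measure_singleton d
  have Gae : ∀ c d : ℝ, 0 ≤ c → 0 ≤ d →
      0 ≤ᵐ[volume] fun u => (K (d + u) - K (d - u)) * (f (c + u) - f (c - u)) := by
    intro c d hc hd
    filter_upwards [aene d, aene (-d)] with u hu1 hu2
    exact Gnn c d hc hd u hu1 hu2
  -- master identity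
  have master : ∀ x₁ x₂ : ℝ, 0 ≤ x₁ → x₁ ≤ x₂ →
      Integrable (fun u => (K ((x₂ - x₁)/2 + u) - K ((x₂ - x₁)/2 - u)) *
        (f ((x₁ + x₂)/2 + u) - f ((x₁ + x₂)/2 - u))) ∧
      ((∫ y, K (x₁ - y) * f y) - ∫ y, K (x₂ - y) * f y) * 2 =
        ∫ u, (K ((x₂ - x₁)/2 + u) - K ((x₂ - x₁)/2 - u)) *
          (f ((x₁ + x₂)/2 + u) - f ((x₁ + x₂)/2 - u)) := by
    intro x₁ x₂ hx₁ hx₁₂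
    set d := (x₂ - x₁)/2 with hd
    set c := (x₁ + x₂)/2 with hc
    have hF : Integrable (fun u => (K (d + u) - K (d - u)) * f (c + u)) := by
      have h0 : Integrable (fun y => (K (x₁ - y) - K (x₂ - y)) * f y) :=
        ((D x₁).sub (D x₂)).congr (ae_of_all _ fun y => by
          simp only [Pi.sub_apply]; ring)
      have h1 := h0.comp_add_right c
      refine h1.congr (ae_of_all _ fun u => ?_)
      show (K (x₁ - (u + c)) - K (x₂ - (u + c))) * f (u + c)
          = (K (d + u) - K (d - u)) * f (c + u)
      rw [show x₁ - (u + c) = -(d + u) by rw [hd, hc]; ring,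
        show x₂ - (u + c) = d - u by rw [hd, hc]; ring, hKeven, add_comm u c]
    have hFneg : Integrable (fun u => (K (d - u) - K (d + u)) * f (c - u)) := by
      refine hF.comp_neg.congr (ae_of_all _ fun u => ?_)
      show (K (d + -u) - K (d - -u)) * f (c + -u) = (K (d - u) - K (d + u)) * f (c - u)
      rw [show d + -u = d - u by ring, show d - -u = d + u by ring,
        show c + -u = c - u by ring]
    have hG : Integrable (fun u => (K (d + u) - K (d - u)) * (f (c + u) - f (c - u))) :=
      (hF.add hFneg).congr (ae_of_all _ fun u => by
        simp only [Pi.add_apply]; ring)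
    refine ⟨hG, ?_⟩
    have e0 : (∫ y, K (x₁ - y) * f y) - ∫ y, K (x₂ - y) * f y
        = ∫ y, (K (x₁ - y) - K (x₂ - y)) * f y := by
      rw [← integral_sub (D x₁) (D x₂)]
      refine integral_congr_ae (ae_of_all _ fun y => ?_)
      show K (x₁ - y) * f y - K (x₂ - y) * f y = (K (x₁ - y) - K (x₂ - y)) * f y
      ring
    have e1 : (∫ y, (K (x₁ - y) - K (x₂ - y)) * f y)
        = ∫ u, (K (d + u) - K (d - u)) * f (c + u) := by
      rw [← integral_add_right_eq_self (fun y => (K (x₁ - y) - K (x₂ - y)) * f y) c]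
      refine integral_congr_ae (ae_of_all _ fun u => ?_)
      show (K (x₁ - (u + c)) - K (x₂ - (u + c))) * f (u + c)
          = (K (d + u) - K (d - u)) * f (c + u)
      rw [show x₁ - (u + c) = -(d + u) by rw [hd, hc]; ring,
        show x₂ - (u + c) = d - u by rw [hd, hc]; ring, hKeven, add_comm u c]
    have e2 : (∫ u, (K (d + u) - K (d - u)) * f (c + u))
        = ∫ u, (K (d - u) - K (d + u)) * f (c - u) := by
      have h := integral_neg_eq_self (fun u => (K (d + u) - K (d - u)) * f (c + u)) volume
      refine h.symm.trans ?_
      refine integral_congr_ae (ae_of_all _ fun u => ?_)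
      show (K (d + -u) - K (d - -u)) * f (c + -u) = (K (d - u) - K (d + u)) * f (c - u)
      rw [show d + -u = d - u by ring, show d - -u = d + u by ring,
        show c + -u = c - u by ring]
    calc ((∫ y, K (x₁ - y) * f y) - ∫ y, K (x₂ - y) * f y) * 2
        = (∫ u, (K (d + u) - K (d - u)) * f (c + u))
          + ∫ u, (K (d - u) - K (d + u)) * f (c - u) := by
          rw [e0, e1, ← e2]; ring
      _ = ∫ u, ((K (d + u) - K (d - u)) * f (c + u)
          + (K (d - u) - K (d + u)) * f (c - u)) := (integral_add hF hFneg).symm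
      _ = ∫ u, (K (d + u) - K (d - u)) * (f (c + u) - f (c - u)) :=
          integral_congr_ae (ae_of_all _ fun u => by
            show (K (d + u) - K (d - u)) * f (c + u) + (K (d - u) - K (d + u)) * f (c - u)
              = (K (d + u) - K (d - u)) * (f (c + u) - f (c - u))
            ring)
  -- Part 3
  have part3 : AntitoneOn (fun x => ∫ y, K (x - y) * f y) (Set.Ici 0) := by
    intro x₁ hx₁ x₂ hx₂ h12
    have hx₁' : (0:ℝ) ≤ x₁ := hx₁
    obtain ⟨hGint, hId⟩ := master x₁ x₂ hx₁' h12
    have hnn := integral_nonneg_of_ae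
      (Gae ((x₁ + x₂)/2) ((x₂ - x₁)/2) (by linarith) (by linarith))
    show (∫ y, K (x₂ - y) * f y) ≤ ∫ y, K (x₁ - y) * f y
    linarith [hId, hnn]
  refine ⟨part1, part2, part3, ?_⟩
  -- Part 4
  intro hnc
  suffices hpos : ∀ x : ℝ, 0 < x → (∫ y, K (x - y) * f y) < ∫ y, K (0 - y) * f y by
    intro x hx
    rcases hx.lt_or_gt with h | h
    · have h2 := part1 (-x)
      simp only [neg_neg] at h2
      rw [h2]
      exact hpos (-x) (by linarith)
    · exact hpos x h
  intro x hx
  by_contra hlt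
  have hle : (∫ y, K (x - y) * f y) ≤ ∫ y, K (0 - y) * f y :=
    part3 (Set.mem_Ici.2 le_rfl) (Set.mem_Ici.2 hx.le) hx.le
  obtain ⟨hGint, hId⟩ := master 0 x le_rfl hx.le
  set d := (x - 0)/2 with hd
  set c := (0 + x)/2 with hc
  have hdpos : 0 < d := by rw [hd]; linarith
  have hcpos : 0 < c := by rw [hc]; linarith
  have hzero : (∫ u, (K (d + u) - K (d - u)) * (f (c + u) - f (c - u))) = 0 := by
    rw [← hId]
    have := not_lt.1 hlt
    linarith
  have hGae0 : (fun u => (K (d + u) - K (d - u)) * (f (c + u) - f (c - u)))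
      =ᵐ[volume] 0 :=
    (integral_eq_zero_iff_of_nonneg_ae (Gae c d hcpos.le hdpos.le) hGint).1 hzero
  have hfsym : ∀ᵐ u : ℝ, f (c + u) = f (c - u) := by
    filter_upwards [hGae0, aene d, aene (-d), aene 0] with u hGu hu1 hu2 hu0
    simp only [Pi.zero_apply] at hGu
    have hdu1 : d + u ≠ 0 := fun h => hu2 (by linarith)
    have hdu2 : d - u ≠ 0 := fun h => hu1 (by linarith)
    have hne : K (d + u) - K (d - u) ≠ 0 := by
      rcases lt_trichotomy u 0 with h | h | h
      · have hlt2 : K (d - u) < K (d + u) :=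
          hKlt (d + u) (d - u) hdu1 hdu2
            (by rw [abs_of_nonneg (show (0:ℝ) ≤ d - u by linarith)]
                exact abs_lt.2 ⟨by linarith, by linarith⟩)
        exact ne_of_gt (by linarith)
      · exact absurd h hu0
      · have hlt2 : K (d + u) < K (d - u) :=
          hKlt (d - u) (d + u) hdu2 hdu1
            (by rw [abs_of_nonneg (show (0:ℝ) ≤ d + u by linarith)]
                exact abs_lt.2 ⟨by linarith, by linarith⟩)
        exact ne_of_lt (by linarith)
    rcases mul_eq_zero.1 hGu with h | h
    · exact absurd h hne
    · linarith [sub_eq_zero.1 h]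
  have hdens : ∀ α β : ℝ, α < β → ∃ u : ℝ, α < u ∧ u < β ∧ u ≠ c ∧ f (c + u) = f (c - u) := by
    intro α β hab
    by_contra hno
    push_neg at hno
    have hsub : Set.Ioo α β ⊆ {u : ℝ | ¬ f (c + u) = f (c - u)} ∪ {c} := by
      intro u hu
      by_cases h : u = c
      · exact Or.inr h
      · exact Or.inl (hno u hu.1 hu.2 h)
    have hnull1 : volume {u : ℝ | ¬ f (c + u) = f (c - u)} = 0 := ae_iff.1 hfsym
    have h0 : volume (Set.Ioo α β) = 0 :=
      measure_mono_null hsub (measure_union_null hnull1 (measure_singleton c))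
    rw [Real.volume_Ioo] at h0
    have := ENNReal.ofReal_eq_zero.1 h0
    linarith
  have hstep : ∀ n : ℕ, ∀ t : ℝ, 0 < t → t ≤ c + n * c → f t = f c := by
    intro n
    induction n with
    | zero =>
      intro t ht htle
      push_cast at htle
      have htc : t ≤ c := by linarith
      have h1 : f c ≤ f t :=
        hfdec (Set.mem_Ici.2 ht.le) (Set.mem_Ici.2 hcpos.le) htc
      obtain ⟨u, hu1, hu2, huc, hueq⟩ := hdens (c - t) c (by linarith)
      have h2 : f t ≤ f (c - u) :=
        hfdec (Set.mem_Ici.2 (by linarith)) (Set.mem_Ici.2 ht.le) (by linarith)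
      have h3 : f (c + u) ≤ f c :=
        hfdec (Set.mem_Ici.2 hcpos.le) (Set.mem_Ici.2 (by linarith)) (by linarith)
      rw [← hueq] at h2
      linarith
    | succ n ih =>
      intro t ht htle
      push_cast at htle
      have hnc0 : (0:ℝ) ≤ (n : ℝ) * c := by positivity
      by_cases hcase : t ≤ c + n * c
      · exact ih t ht (by push_cast; linarith)
      · push_neg at hcase
        have hub : f t ≤ f c := by
          obtain ⟨u, hu1, hu2, huc, hueq⟩ := hdens ((n : ℝ) * c) (t - c) (by linarith)
          have hu0 : 0 < u := by linarith
          have h1 : f t ≤ f (c + u) :=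
            hfdec (Set.mem_Ici.2 (by linarith)) (Set.mem_Ici.2 (by linarith)) (by linarith)
          have habs1 : 0 < |c - u| := abs_pos.2 (sub_ne_zero_of_ne huc.symm)
          have habs2 : |c - u| ≤ c + n * c := by
            rcases abs_cases (c - u) with ⟨h, _⟩ | ⟨h, _⟩ <;> rw [h] <;> linarith
          have h3 : f (c + u) = f c := by
            rw [hueq, hfabs (c - u)]
            exact ih |c - u| habs1 habs2
          linarith
        have hlb : f c ≤ f t := by
          obtain ⟨u, hu1, hu2, huc, hueq⟩ := hdens (t - c) t (by linarith)
          have hu0 : 0 < u := by linarith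
          have h1 : f (c + u) ≤ f t :=
            hfdec (Set.mem_Ici.2 ht.le) (Set.mem_Ici.2 (by linarith)) (by linarith)
          have habs1 : 0 < |c - u| := abs_pos.2 (sub_ne_zero_of_ne huc.symm)
          have habs2 : |c - u| ≤ c + n * c := by
            rcases abs_cases (c - u) with ⟨h, _⟩ | ⟨h, _⟩ <;> rw [h] <;> linarith
          have h3 : f (c + u) = f c := by
            rw [hueq, hfabs (c - u)]
            exact ih |c - u| habs1 habs2
          linarith
        exact le_antisymm hub hlb
  have hall : ∀ t : ℝ, 0 < t → f t = f c := by
    intro t ht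
    obtain ⟨n, hn⟩ := exists_nat_ge ((t - c)/c)
    refine hstep n t ht ?_
    rw [div_le_iff₀ hcpos] at hn
    linarith
  refine hnc ⟨f c, ?_⟩
  filter_upwards [aene 0] with t ht
  rcases ht.lt_or_gt with h | h
  · rw [← hfeven t]
    exact hall (-t) (by linarith)
  · exact hall t h
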